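/- Let A be a finite set and φ: A^ω → ℝ a continuous payoff such that for every letter a ∈ A there exist λ(a) ∈ [0,1) and w(a) ∈ ℝ with φ(aβ) = λ(a)φ(β) + w(a) for all β ∈ A^ω. Then φ is multi-discounted: φ(a₁a₂a₃…) = Σ_{n=1}^∞ λ(a₁)·…·λ(a_{n-1})·w(a_n) for every a₁a₂a₃… ∈ A^ω. -/

import Mathlib

open Filter Topology

/-- Concatenation of a finite word with an infinite word. -/
def wcat {A : Type*} (u : List A) (β : ℕ → A) : ℕ → A :=
  fun n => if h : n < u.length then u.get ⟨n, h⟩ else β (n - u.length)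

theorem affine_shifts_implies_multiDiscounted
    {A : Type*} [Fintype A] [Nonempty A] [TopologicalSpace A] [DiscreteTopology A]
    (φ : (ℕ → A) → ℝ) (hcont : Continuous φ)
    (l w : A → ℝ) (hl : ∀ a, l a ∈ Set.Ico (0 : ℝ) 1)
    (haff : ∀ (a : A) (β : ℕ → A), φ (wcat [a] β) = l a * φ β + w a) :
    ∀ α : ℕ → A, φ α = ∑' n : ℕ, (∏ i ∈ Finset.range n, l (α i)) * w (α n) := by
  intro α
  -- uniform bound c < 1 on l
  obtain ⟨c, hc0, hc1, hcl⟩ : ∃ c : ℝ, 0 ≤ c ∧ c < 1 ∧ ∀ a, l a ≤ c := by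
    refine ⟨Finset.univ.sup' Finset.univ_nonempty l, ?_, ?_, ?_⟩
    · obtain ⟨a⟩ := ‹Nonempty A›
      exact le_trans (hl a).1 (Finset.le_sup' l (Finset.mem_univ a))
    · exact (Finset.sup'_lt_iff Finset.univ_nonempty).2 fun a _ => (hl a).2
    · exact fun a => Finset.le_sup' l (Finset.mem_univ a)
  -- bound on |φ|
  obtain ⟨C, hC⟩ : ∃ C : ℝ, ∀ β : ℕ → A, |φ β| ≤ C := by
    obtain ⟨C, hC⟩ := (isCompact_univ : IsCompact (Set.univ : Set (ℕ → A))).exists_bound_of_continuousOn hcont.continuousOn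
    exact ⟨C, fun β => hC β trivial⟩
  -- bound on |w|
  obtain ⟨W, hW0, hW⟩ : ∃ W : ℝ, 0 ≤ W ∧ ∀ a, |w a| ≤ W := by
    refine ⟨Finset.univ.sup' Finset.univ_nonempty (fun a => |w a|), ?_, ?_⟩
    · obtain ⟨a⟩ := ‹Nonempty A›
      exact le_trans (abs_nonneg (w a)) (Finset.le_sup' (fun a => |w a|) (Finset.mem_univ a))
    · exact fun a => Finset.le_sup' (fun a => |w a|) (Finset.mem_univ a)
  set P : ℕ → ℝ := fun n => ∏ i ∈ Finset.range n, l (α i) with hP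
  have hP0 : ∀ n, 0 ≤ P n := fun n => Finset.prod_nonneg fun i _ => (hl (α i)).1
  have hPc : ∀ n, P n ≤ c ^ n := by
    intro n
    calc P n ≤ ∏ i ∈ Finset.range n, c :=
          Finset.prod_le_prod (fun i _ => (hl (α i)).1) (fun i _ => hcl (α i))
      _ = c ^ n := by simp
  -- key identity
  have key : ∀ n, φ α = (∑ i ∈ Finset.range n, P i * w (α i)) + P n * φ (fun k => α (n + k)) := by
    intro n
    induction n with
    | zero => simp [hP]
    | succ n ih =>
      have hw : wcat [α n] (fun k => α (n + 1 + k)) = fun k => α (n + k) := by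
        funext k
        rcases k with _ | k
        · simp [wcat]
        · simp only [wcat, List.length_singleton]
          rw [dif_neg (by omega)]
          congr 1
          omega
      have hstep := haff (α n) (fun k => α (n + 1 + k))
      rw [hw] at hstep
      have hPs : P (n + 1) = P n * l (α n) := Finset.prod_range_succ _ _
      rw [Finset.sum_range_succ, hPs, ih, hstep]
      ring
  -- summability
  have hsum : Summable (fun n => P n * w (α n)) := by
    apply Summable.of_norm_bounded (g := fun n => c ^ n * W)
    · exact (summable_geometric_of_lt_one hc0 hc1).mul_right W
    · intro n
      rw [Real.norm_eq_abs, abs_mul, abs_of_nonneg (hP0 n)]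
      exact mul_le_mul (hPc n) (hW (α n)) (abs_nonneg _) (pow_nonneg hc0 n)
  -- partial sums tend to tsum
  have h1 : Tendsto (fun n => ∑ i ∈ Finset.range n, P i * w (α i)) atTop
      (𝓝 (∑' n, P n * w (α n))) := hsum.hasSum.tendsto_sum_nat
  -- partial sums tend to φ α
  have h2 : Tendsto (fun n => ∑ i ∈ Finset.range n, P i * w (α i)) atTop (𝓝 (φ α)) := by
    have hrem : Tendsto (fun n => P n * φ (fun k => α (n + k))) atTop (𝓝 0) := by
      have hbnd : ∀ n, ‖P n * φ (fun k => α (n + k))‖ ≤ c ^ n * C := by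
        intro n
        rw [Real.norm_eq_abs, abs_mul, abs_of_nonneg (hP0 n)]
        exact mul_le_mul (hPc n) (hC _) (abs_nonneg _) (pow_nonneg hc0 n)
      have hg : Tendsto (fun n => c ^ n * C) atTop (𝓝 0) := by
        simpa using (tendsto_pow_atTop_nhds_zero_of_lt_one hc0 hc1).mul_const C
      exact squeeze_zero_norm hbnd hg
    have : (fun n => ∑ i ∈ Finset.range n, P i * w (α i))
        = fun n => φ α - P n * φ (fun k => α (n + k)) := by
      funext n; rw [key n]; ring
    rw [this]
    simpa using tendsto_const_nhds.sub hrem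
  exact tendsto_nhds_unique h2 h1
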